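/- arXiv:1110.2799 — 2 statements merged into one kernel-verified Lean document; each statement's English description precedes it below -/
import Mathlib

section
/- For a matroid M with at least one element, all coefficients t_{ij} of the Tutte polynomial T_M(x,y) are nonnegative, and the constant coefficient t_{00} is zero. -/
/- STATEMENT 4: for a matroid M with nonempty ground set, all coefficients
t_{ij} of the Tutte polynomial are nonnegative and the constant coefficient
t_{00} is zero. -/

structure RankMatroid (α : Type*) [DecidableEq α] where
  E : Finset α
  r : Finset α → ℕ
  r_empty : r ∅ = 0
  r_le_card : ∀ S, S ⊆ E → r S ≤ S.card
  r_mono : ∀ S T, S ⊆ T → T ⊆ E → r S ≤ r T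
  r_submod : ∀ S T, S ⊆ E → T ⊆ E → r (S ∪ T) + r (S ∩ T) ≤ r S + r T

namespace RankMatroid

variable {α : Type*} [DecidableEq α] (M : RankMatroid α)

/-- Tutte polynomial, `x = X 0`, `y = X 1`. -/
noncomputable def tutte : MvPolynomial (Fin 2) ℤ :=
  ∑ S ∈ M.E.powerset,
    (MvPolynomial.X 0 - 1) ^ (M.r M.E - M.r S) *
      (MvPolynomial.X 1 - 1) ^ (S.card - M.r S)

end RankMatroid

open Finset MvPolynomial

namespace RankMatroid

variable {α : Type*} [DecidableEq α]

lemma r_singleton_le_one (M : RankMatroid α) {e : α} (he : e ∈ M.E) : M.r {e} ≤ 1 := by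
  simpa using M.r_le_card {e} (by simpa using he)

lemma r_insert_le (M : RankMatroid α) {e : α} (he : e ∈ M.E) {S : Finset α}
    (hS : S ⊆ M.E) (heS : e ∉ S) : M.r (insert e S) ≤ M.r S + M.r {e} := by
  have hsub := M.r_submod S {e} hS (by simpa using he)
  have h1 : S ∪ {e} = insert e S := by ext x; simp [or_comm]
  have h2 : S ∩ {e} = ∅ := by
    ext x; simp only [mem_inter, mem_singleton, notMem_empty, iff_false]
    rintro ⟨hx, rfl⟩; exact heS hx
  rw [h1, h2, M.r_empty] at hsub
  omega

lemma r_insert_of_loop (M : RankMatroid α) {e : α} (he : e ∈ M.E) (h0 : M.r {e} = 0)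
    {S : Finset α} (hS : S ⊆ M.E) (heS : e ∉ S) : M.r (insert e S) = M.r S := by
  have hup := M.r_insert_le he hS heS
  have hlow := M.r_mono S (insert e S) (subset_insert _ _) (insert_subset he hS)
  omega

lemma r_insert_of_coloop (M : RankMatroid α) {e : α} (he : e ∈ M.E)
    (hco : M.r (M.E.erase e) + 1 = M.r M.E)
    {S : Finset α} (hS : S ⊆ M.E.erase e) : M.r (insert e S) = M.r S + 1 := by
  have heS : e ∉ S := fun h => (mem_erase.mp (hS h)).1 rfl
  have hSE : S ⊆ M.E := hS.trans (erase_subset _ _)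
  have hone := M.r_singleton_le_one he
  have hup := M.r_insert_le he hSE heS
  have hsub := M.r_submod (insert e S) (M.E.erase e) (insert_subset he hSE) (erase_subset _ _)
  have h1 : insert e S ∪ M.E.erase e = M.E := by
    rw [insert_union, union_eq_right.mpr hS, insert_erase he]
  have h2 : insert e S ∩ M.E.erase e = S := by
    rw [insert_inter_of_notMem (notMem_erase e _), inter_eq_left.mpr hS]
  rw [h1, h2] at hsub
  omega

/-- Deletion of an element. -/
def delete (M : RankMatroid α) (e : α) : RankMatroid α where
  E := M.E.erase e
  r := M.r
  r_empty := M.r_empty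
  r_le_card S hS := M.r_le_card S (hS.trans (erase_subset _ _))
  r_mono S T hST hT := M.r_mono S T hST (hT.trans (erase_subset _ _))
  r_submod S T hS hT :=
    M.r_submod S T (hS.trans (erase_subset _ _)) (hT.trans (erase_subset _ _))

/-- Contraction of a non-loop element. -/
def contract (M : RankMatroid α) (e : α) (he : e ∈ M.E) (h1 : M.r {e} = 1) :
    RankMatroid α where
  E := M.E.erase e
  r S := M.r (insert e S) - 1
  r_empty := by simp [h1]
  r_le_card S hS := by
    try dsimp only
    have heS : e ∉ S := fun h => (mem_erase.mp (hS h)).1 rfl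
    have hSE : S ⊆ M.E := hS.trans (erase_subset _ _)
    have h := M.r_le_card (insert e S) (insert_subset he hSE)
    rw [card_insert_of_notMem heS] at h
    omega
  r_mono S T hST hT := by
    try dsimp only
    have hTE : T ⊆ M.E := hT.trans (erase_subset _ _)
    have := M.r_mono (insert e S) (insert e T) (insert_subset_insert _ hST)
      (insert_subset he hTE)
    omega
  r_submod S T hS hT := by
    try dsimp only
    have hS' : insert e S ⊆ M.E := insert_subset he (hS.trans (erase_subset _ _))
    have hT' : insert e T ⊆ M.E := insert_subset he (hT.trans (erase_subset _ _))
    have h := M.r_submod (insert e S) (insert e T) hS' hT'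
    rw [show insert e S ∪ insert e T = insert e (S ∪ T) by
        simp [insert_union, union_insert],
      show insert e S ∩ insert e T = insert e (S ∩ T) by
        ext x; simp only [mem_inter, mem_insert]; tauto] at h
    have hsl : 1 ≤ M.r (insert e S) := h1 ▸ M.r_mono {e} _ (by simp) hS'
    have htl : 1 ≤ M.r (insert e T) := h1 ▸ M.r_mono {e} _ (by simp) hT'
    have hul : 1 ≤ M.r (insert e (S ∪ T)) := h1 ▸ M.r_mono {e} _ (by simp)
      (insert_subset he ((union_subset hS hT).trans (erase_subset _ _)))
    have hil : 1 ≤ M.r (insert e (S ∩ T)) := h1 ▸ M.r_mono {e} _ (by simp)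
      (insert_subset he (((inter_subset_left).trans hS).trans (erase_subset _ _)))
    omega

lemma tutte_eq (M : RankMatroid α) : M.tutte
    = ∑ S ∈ M.E.powerset,
        (X 0 - 1) ^ (M.r M.E - M.r S) * (X 1 - 1) ^ (S.card - M.r S) := rfl

lemma tutte_empty (M : RankMatroid α) (h : M.E = ∅) : M.tutte = 1 := by
  simp [tutte, h, M.r_empty]

lemma tutte_loop (M : RankMatroid α) {e : α} (he : e ∈ M.E) (h0 : M.r {e} = 0) :
    M.tutte = X 1 * (M.delete e).tutte := by
  set E' := M.E.erase e with hE'def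
  have heE' : e ∉ E' := notMem_erase e _
  have hE : M.E = insert e E' := (insert_erase he).symm
  have hsub : E' ⊆ M.E := erase_subset _ _
  have hrE : M.r (insert e E') = M.r E' := M.r_insert_of_loop he h0 hsub heE'
  have hdel : (M.delete e).tutte
      = ∑ S ∈ E'.powerset, (X 0 - 1) ^ (M.r E' - M.r S) * (X 1 - 1) ^ (S.card - M.r S) := by
    rw [hE'def]; rfl
  rw [M.tutte_eq, hE, sum_powerset_insert heE', hrE]
  have hstep : ∀ S ∈ E'.powerset,
      (X 0 - 1 : MvPolynomial (Fin 2) ℤ) ^ (M.r E' - M.r (insert e S)) *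
        (X 1 - 1) ^ ((insert e S).card - M.r (insert e S))
      = (X 1 - 1) * ((X 0 - 1) ^ (M.r E' - M.r S) * (X 1 - 1) ^ (S.card - M.r S)) := by
    intro S hS
    rw [mem_powerset] at hS
    have heS : e ∉ S := fun h => heE' (hS h)
    have hSE : S ⊆ M.E := hS.trans hsub
    have hins : M.r (insert e S) = M.r S := M.r_insert_of_loop he h0 hSE heS
    have hcard : (insert e S).card = S.card + 1 := card_insert_of_notMem heS
    have hle : M.r S ≤ S.card := M.r_le_card S hSE
    rw [hins, hcard, show S.card + 1 - M.r S = (S.card - M.r S) + 1 by omega, pow_succ]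
    ring
  rw [sum_congr rfl hstep, ← mul_sum, ← hdel]
  ring

lemma tutte_coloop (M : RankMatroid α) {e : α} (he : e ∈ M.E)
    (hco : M.r (M.E.erase e) + 1 = M.r M.E) :
    M.tutte = X 0 * (M.delete e).tutte := by
  set E' := M.E.erase e with hE'def
  have heE' : e ∉ E' := notMem_erase e _
  have hE : M.E = insert e E' := (insert_erase he).symm
  have hsub : E' ⊆ M.E := erase_subset _ _
  have hrE : M.r (insert e E') = M.r E' + 1 := by rw [← hE]; omega
  have hdel : (M.delete e).tutte
      = ∑ S ∈ E'.powerset, (X 0 - 1) ^ (M.r E' - M.r S) * (X 1 - 1) ^ (S.card - M.r S) := by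
    rw [hE'def]; rfl
  rw [M.tutte_eq, hE, sum_powerset_insert heE', hrE]
  have hstep1 : ∀ S ∈ E'.powerset,
      (X 0 - 1 : MvPolynomial (Fin 2) ℤ) ^ (M.r E' + 1 - M.r S) *
        (X 1 - 1) ^ (S.card - M.r S)
      = (X 0 - 1) * ((X 0 - 1) ^ (M.r E' - M.r S) * (X 1 - 1) ^ (S.card - M.r S)) := by
    intro S hS
    rw [mem_powerset] at hS
    have hle : M.r S ≤ M.r E' := M.r_mono S E' hS hsub
    rw [show M.r E' + 1 - M.r S = (M.r E' - M.r S) + 1 by omega, pow_succ]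
    ring
  have hstep2 : ∀ S ∈ E'.powerset,
      (X 0 - 1 : MvPolynomial (Fin 2) ℤ) ^ (M.r E' + 1 - M.r (insert e S)) *
        (X 1 - 1) ^ ((insert e S).card - M.r (insert e S))
      = (X 0 - 1) ^ (M.r E' - M.r S) * (X 1 - 1) ^ (S.card - M.r S) := by
    intro S hS
    rw [mem_powerset] at hS
    have heS : e ∉ S := fun h => heE' (hS h)
    have hins : M.r (insert e S) = M.r S + 1 := M.r_insert_of_coloop he hco hS
    have hcard : (insert e S).card = S.card + 1 := card_insert_of_notMem heS
    rw [hins, hcard]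
    congr 2 <;> omega
  rw [sum_congr rfl hstep1, sum_congr rfl hstep2, ← mul_sum, ← hdel]
  ring

lemma tutte_rec (M : RankMatroid α) {e : α} (he : e ∈ M.E) (h1 : M.r {e} = 1)
    (hr : M.r (M.E.erase e) = M.r M.E) :
    M.tutte = (M.delete e).tutte + (M.contract e he h1).tutte := by
  set E' := M.E.erase e with hE'def
  have heE' : e ∉ E' := notMem_erase e _
  have hE : M.E = insert e E' := (insert_erase he).symm
  have hsub : E' ⊆ M.E := erase_subset _ _
  have hrE : M.r (insert e E') = M.r E' := by rw [← hE]; omega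
  have hdel : (M.delete e).tutte
      = ∑ S ∈ E'.powerset, (X 0 - 1) ^ (M.r E' - M.r S) * (X 1 - 1) ^ (S.card - M.r S) := by
    rw [hE'def]; rfl
  have hcon : (M.contract e he h1).tutte
      = ∑ S ∈ E'.powerset, (X 0 - 1) ^ ((M.r (insert e E') - 1) - (M.r (insert e S) - 1)) *
          (X 1 - 1) ^ (S.card - (M.r (insert e S) - 1)) := by
    rw [hE'def]; rfl
  rw [M.tutte_eq, hE, sum_powerset_insert heE', hdel, hcon]
  congr 1
  · apply sum_congr rfl
    intro S hS
    rw [hrE]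
  · apply sum_congr rfl
    intro S hS
    rw [mem_powerset] at hS
    have heS : e ∉ S := fun h => heE' (hS h)
    have hSE : S ⊆ M.E := hS.trans hsub
    have hins1 : 1 ≤ M.r (insert e S) :=
      h1 ▸ M.r_mono {e} (insert e S) (by simp) (insert_subset he hSE)
    have hmono : M.r (insert e S) ≤ M.r (insert e E') :=
      M.r_mono _ _ (insert_subset_insert _ hS) (by rw [← hE])
    have hcard : (insert e S).card = S.card + 1 := card_insert_of_notMem heS
    rw [hcard]
    congr 2 <;> omega

lemma coeff_tutte_nonneg_aux :
    ∀ (n : ℕ) (M : RankMatroid α), M.E.card ≤ n →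
      (∀ d : Fin 2 →₀ ℕ, 0 ≤ coeff d M.tutte) ∧
        (M.E.Nonempty → coeff 0 M.tutte = 0) := by
  have nnX : ∀ (i : Fin 2) (d : Fin 2 →₀ ℕ),
      (0 : ℤ) ≤ coeff d (X i : MvPolynomial (Fin 2) ℤ) := by
    intro i d
    rw [coeff_X']
    split <;> norm_num
  have nnmul : ∀ (p q : MvPolynomial (Fin 2) ℤ),
      (∀ d, 0 ≤ coeff d p) → (∀ d, 0 ≤ coeff d q) → ∀ d, 0 ≤ coeff d (p * q) := by
    intro p q hp hq d
    rw [coeff_mul]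
    exact Finset.sum_nonneg fun x _ => mul_nonneg (hp _) (hq _)
  have c0mul : ∀ (i : Fin 2) (p : MvPolynomial (Fin 2) ℤ), coeff 0 (X i * p) = 0 := by
    intro i p
    have : constantCoeff (X i * p) = constantCoeff (X i) * constantCoeff p := map_mul _ _ _
    rw [constantCoeff_eq] at this
    simpa [constantCoeff_X] using this
  intro n
  induction n with
  | zero =>
    intro M hM
    have hE : M.E = ∅ := card_eq_zero.mp (Nat.le_zero.mp hM)
    rw [M.tutte_empty hE]
    refine ⟨fun d => ?_, fun h => absurd hE (nonempty_iff_ne_empty.mp h)⟩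
    rw [coeff_one]
    split <;> norm_num
  | succ n ih =>
    intro M hM
    rcases M.E.eq_empty_or_nonempty with hE | ⟨e, he⟩
    · rw [M.tutte_empty hE]
      refine ⟨fun d => ?_, fun h => absurd hE (nonempty_iff_ne_empty.mp h)⟩
      rw [coeff_one]
      split <;> norm_num
    · have hcard : (M.E.erase e).card ≤ n := by
        have h1 := card_erase_of_mem he
        have h2 : 1 ≤ M.E.card := card_pos.mpr ⟨e, he⟩
        omega
      have hdel := ih (M.delete e) hcard
      by_cases h0 : M.r {e} = 0
      · rw [M.tutte_loop he h0]
        exact ⟨nnmul _ _ (nnX 1) hdel.1, fun _ => c0mul 1 _⟩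
      · have h1 : M.r {e} = 1 := by
          have := M.r_singleton_le_one he
          omega
        by_cases hreq : M.r (M.E.erase e) = M.r M.E
        · have hE'ne : (M.E.erase e).Nonempty := by
            rw [nonempty_iff_ne_empty]
            intro h
            have hle : M.r {e} ≤ M.r M.E :=
              M.r_mono {e} M.E (by simpa using he) Subset.rfl
            rw [← hreq, h, M.r_empty] at hle
            omega
          have hcon := ih (M.contract e he h1) hcard
          rw [M.tutte_rec he h1 hreq]
          refine ⟨fun d => add_nonneg (hdel.1 d) (hcon.1 d), fun _ => ?_⟩
          rw [coeff_add, hdel.2 hE'ne, hcon.2 hE'ne, add_zero]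
        · have hco : M.r (M.E.erase e) + 1 = M.r M.E := by
            have hle : M.r (M.E.erase e) ≤ M.r M.E :=
              M.r_mono _ _ (erase_subset _ _) Subset.rfl
            have hle2 : M.r M.E ≤ M.r (M.E.erase e) + 1 := by
              have h := M.r_insert_le he (erase_subset e M.E) (notMem_erase e _)
              rw [insert_erase he] at h
              omega
            omega
          rw [M.tutte_coloop he hco]
          exact ⟨nnmul _ _ (nnX 0) hdel.1, fun _ => c0mul 0 _⟩

end RankMatroid

/-- All Tutte coefficients are nonnegative and `t_{00} = 0`. -/
theorem tutte_coeff_nonneg_and_t00_eq_zero {α : Type*} [DecidableEq α]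
    (M : RankMatroid α) (hE : M.E.Nonempty) :
    (∀ d : Fin 2 →₀ ℕ, 0 ≤ MvPolynomial.coeff d M.tutte) ∧
      MvPolynomial.coeff 0 M.tutte = 0 := by
  obtain ⟨h1, h2⟩ := RankMatroid.coeff_tutte_nonneg_aux M.E.card M le_rfl
  exact ⟨h1, h2 hE⟩
end

section
/- For a central essential arrangement A of n hyperplanes in ℂ^ℓ, the critical set Σ(A) = {(x, λ) ∈ M × ℂ^n : ω_λ(x) = 0} is, under the projection to M, a vector subbundle of the trivial bundle M × ℂ^n of rank n − ℓ, where M is the complement of the arrangement. -/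
/- STATEMENT 7: for a central essential arrangement A of n hyperplanes in ℂ^ℓ,
the critical set Σ(A) = {(x,λ) ∈ M × ℂⁿ : ω_λ(x) = 0}, under projection to the
complement M, is a vector subbundle of the trivial bundle M × ℂⁿ of rank n − ℓ:
each fiber is an (n−ℓ)-dimensional subspace of ℂⁿ, and around every point of M
there is a continuous local frame of the fibers. -/

noncomputable section
set_option maxHeartbeats 1000000

variable (ℓ n : ℕ)

/-- The linear map `λ ↦ ω_λ(x) = Σᵢ (λᵢ / fᵢ(x)) • fᵢ` with values in the dual. -/
def omegaAt (f : Fin n → ((Fin ℓ → ℂ) →ₗ[ℂ] ℂ)) (x : Fin ℓ → ℂ) :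
    (Fin n → ℂ) →ₗ[ℂ] ((Fin ℓ → ℂ) →ₗ[ℂ] ℂ) :=
  ∑ i : Fin n, (f i x)⁻¹ • ((LinearMap.proj i : (Fin n → ℂ) →ₗ[ℂ] ℂ).smulRight (f i))

/-- Fiber of the critical set `Σ(A)` over `x`. -/
def criticalFiber (f : Fin n → ((Fin ℓ → ℂ) →ₗ[ℂ] ℂ)) (x : Fin ℓ → ℂ) :
    Submodule ℂ (Fin n → ℂ) :=
  LinearMap.ker (omegaAt ℓ n f x)


/-! ### Auxiliary material -/

open Matrix

lemma omegaAt_apply (f : Fin n → ((Fin ℓ → ℂ) →ₗ[ℂ] ℂ)) (x : Fin ℓ → ℂ)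
    (lam : Fin n → ℂ) (v : Fin ℓ → ℂ) :
    omegaAt ℓ n f x lam v = ∑ i : Fin n, (f i x)⁻¹ * (lam i * f i v) := by
  simp [omegaAt, LinearMap.sum_apply, LinearMap.smul_apply, LinearMap.smulRight_apply,
    LinearMap.proj_apply, smul_eq_mul]

/-- The matrix of `omegaAt` in the standard bases. -/
def Amat (f : Fin n → ((Fin ℓ → ℂ) →ₗ[ℂ] ℂ)) (x : Fin ℓ → ℂ) :
    Matrix (Fin ℓ) (Fin n) ℂ :=
  Matrix.of fun k i => (f i x)⁻¹ * f i (Pi.single k 1)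

lemma omegaAt_single (f : Fin n → ((Fin ℓ → ℂ) →ₗ[ℂ] ℂ)) (x : Fin ℓ → ℂ)
    (lam : Fin n → ℂ) (k : Fin ℓ) :
    omegaAt ℓ n f x lam (Pi.single k 1) = (Amat ℓ n f x).mulVec lam k := by
  rw [omegaAt_apply]
  simp only [Amat, Matrix.mulVec, dotProduct, Matrix.of_apply]
  exact Finset.sum_congr rfl fun i _ => by ring

lemma mem_criticalFiber_iff (f : Fin n → ((Fin ℓ → ℂ) →ₗ[ℂ] ℂ)) (x : Fin ℓ → ℂ)
    (lam : Fin n → ℂ) :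
    lam ∈ criticalFiber ℓ n f x ↔ (Amat ℓ n f x).mulVec lam = 0 := by
  rw [criticalFiber, LinearMap.mem_ker]
  constructor
  · intro h
    funext k
    rw [← omegaAt_single, h]
    rfl
  · intro h
    apply (Pi.basisFun ℂ (Fin ℓ)).ext
    intro k
    rw [Pi.basisFun_apply, omegaAt_single, h]
    rfl

lemma surjective_omegaAt (f : Fin n → ((Fin ℓ → ℂ) →ₗ[ℂ] ℂ))
    (hess : Submodule.span ℂ (Set.range f) = ⊤) (x : Fin ℓ → ℂ)
    (hx : ∀ i, f i x ≠ 0) : Function.Surjective (omegaAt ℓ n f x) := by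
  rw [← LinearMap.range_eq_top, eq_top_iff, ← hess, Submodule.span_le]
  rintro _ ⟨i, rfl⟩
  refine ⟨Pi.single i (f i x), ?_⟩
  apply LinearMap.ext
  intro v
  rw [omegaAt_apply, Finset.sum_eq_single i]
  · rw [Pi.single_eq_same]
    rw [← mul_assoc, inv_mul_cancel₀ (hx i), one_mul]
  · intro k _ hk
    rw [Pi.single_eq_of_ne hk]
    ring
  · intro h
    exact absurd (Finset.mem_univ i) h

lemma finrank_criticalFiber (f : Fin n → ((Fin ℓ → ℂ) →ₗ[ℂ] ℂ))
    (hess : Submodule.span ℂ (Set.range f) = ⊤) (x : Fin ℓ → ℂ)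
    (hx : ∀ i, f i x ≠ 0) :
    Module.finrank ℂ (criticalFiber ℓ n f x) = n - ℓ := by
  have h1 := LinearMap.finrank_range_add_finrank_ker (omegaAt ℓ n f x)
  have h2 : LinearMap.range (omegaAt ℓ n f x) = ⊤ :=
    LinearMap.range_eq_top.mpr (surjective_omegaAt ℓ n f hess x hx)
  rw [h2, finrank_top] at h1
  have h3 : Module.finrank ℂ ((Fin ℓ → ℂ) →ₗ[ℂ] ℂ) = ℓ := by
    rw [Module.finrank_linearMap]
    simp
  rw [h3, Module.finrank_fin_fun] at h1
  rw [criticalFiber]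
  omega

lemma mulVec_surj (f : Fin n → ((Fin ℓ → ℂ) →ₗ[ℂ] ℂ))
    (hess : Submodule.span ℂ (Set.range f) = ⊤) (x : Fin ℓ → ℂ)
    (hx : ∀ i, f i x ≠ 0) : Function.Surjective ((Amat ℓ n f x).mulVec) := by
  intro y
  obtain ⟨lam, hlam⟩ := surjective_omegaAt ℓ n f hess x hx
    (∑ k, y k • (LinearMap.proj k : (Fin ℓ → ℂ) →ₗ[ℂ] ℂ))
  refine ⟨lam, ?_⟩
  funext k
  rw [← omegaAt_single, hlam]
  simp [LinearMap.sum_apply, LinearMap.smul_apply, LinearMap.proj_apply, Pi.single_apply,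
    smul_eq_mul, mul_ite, mul_one, mul_zero, Finset.sum_ite_eq]

/-- `Σ(A) → M` is a rank `n − ℓ` vector subbundle of the trivial bundle
`M × ℂⁿ`: fibers have dimension `n − ℓ` and admit continuous local frames. -/
theorem critical_set_is_vector_bundle (f : Fin n → ((Fin ℓ → ℂ) →ₗ[ℂ] ℂ))
    (hne : ∀ i, f i ≠ 0)
    (hess : Submodule.span ℂ (Set.range f) = ⊤) :
    (∀ x : Fin ℓ → ℂ, (∀ i, f i x ≠ 0) →
        Module.finrank ℂ (criticalFiber ℓ n f x) = n - ℓ) ∧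
      (∀ x₀ : Fin ℓ → ℂ, (∀ i, f i x₀ ≠ 0) →
        ∃ U : Set (Fin ℓ → ℂ), IsOpen U ∧ x₀ ∈ U ∧
          (∀ x ∈ U, ∀ i, f i x ≠ 0) ∧
          ∃ s : Fin (n - ℓ) → (Fin ℓ → ℂ) → (Fin n → ℂ),
            (∀ j, ContinuousOn (s j) U) ∧
            ∀ x ∈ U, LinearIndependent ℂ (fun j => s j x) ∧
              criticalFiber ℓ n f x =
                Submodule.span ℂ (Set.range fun j => s j x)) := by
  classical
  refine ⟨fun x hx => finrank_criticalFiber ℓ n f hess x hx, ?_⟩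
  intro x₀ hx₀
  set A : (Fin ℓ → ℂ) → Matrix (Fin ℓ) (Fin n) ℂ := fun x => Amat ℓ n f x with hAdef
  -- the columns of `A x₀` span `ℂ^ℓ`
  have hspan : Submodule.span ℂ (Set.range fun i => (A x₀)ᵀ i) = ⊤ := by
    rw [eq_top_iff]
    intro y _
    obtain ⟨lam, hlam⟩ := mulVec_surj ℓ n f hess x₀ hx₀ y
    have hsum : (A x₀).mulVec lam = ∑ i, lam i • (A x₀)ᵀ i := by
      funext k
      simp [Matrix.mulVec, dotProduct, Finset.sum_apply, Matrix.transpose_apply,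
        mul_comm]
    rw [← hlam, hsum]
    exact Submodule.sum_mem _ fun i _ => Submodule.smul_mem _ _ (Submodule.subset_span ⟨i, rfl⟩)
  -- extract `ℓ` linearly independent columns
  obtain ⟨b, hbsub, hbspan, hbind⟩ := exists_linearIndependent ℂ (Set.range fun i => (A x₀)ᵀ i)
  rw [hspan] at hbspan
  haveI : Fintype b := hbind.setFinite.fintype
  have hbbasis : Module.Basis b ℂ (Fin ℓ → ℂ) :=
    Module.Basis.mk hbind (by rw [Subtype.range_coe, hbspan])
  have hcard : Fintype.card b = ℓ := by
    have h := Module.finrank_eq_card_basis hbbasis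
    rw [Module.finrank_fin_fun] at h
    omega
  let e : Fin ℓ ≃ b := (Fintype.equivFinOfCardEq hcard).symm
  have hchoice : ∀ v : b, ∃ i : Fin n, (A x₀)ᵀ i = (v : Fin ℓ → ℂ) := fun v => hbsub v.2
  choose idx hidx using hchoice
  set g : Fin ℓ → Fin n := fun m => idx (e m) with hgdef
  have hginj : Function.Injective g := by
    intro m m' h
    have hv : ((e m : b) : Fin ℓ → ℂ) = ((e m' : b) : Fin ℓ → ℂ) := by
      rw [← hidx (e m), ← hidx (e m')]
      simp only [hgdef] at h
      rw [h]
    exact e.injective (Subtype.ext hv)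
  have hindg : LinearIndependent ℂ (fun m => (A x₀)ᵀ (g m)) := by
    have hcomp : (fun m => (A x₀)ᵀ (g m)) = (fun v : b => (v : Fin ℓ → ℂ)) ∘ e :=
      funext fun m => hidx (e m)
    rw [hcomp]
    exact hbind.comp e e.injective
  set B : (Fin ℓ → ℂ) → Matrix (Fin ℓ) (Fin ℓ) ℂ := fun x => (A x).submatrix id g with hBdef
  have hdet₀ : (B x₀).det ≠ 0 := by
    have hcols : LinearIndependent ℂ (fun m => (B x₀)ᵀ m) := hindg
    have hu := Matrix.linearIndependent_cols_iff_isUnit.mp hcols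
    rw [Matrix.isUnit_iff_isUnit_det] at hu
    exact hu.ne_zero
  -- complement of the chosen columns
  set gs : Finset (Fin n) := Finset.univ.image g with hgsdef
  have hgscard : gsᶜ.card = n - ℓ := by
    rw [Finset.card_compl, hgsdef, Finset.card_image_of_injective _ hginj]
    simp
  set gc : Fin (n - ℓ) → Fin n := fun j => ((gsᶜ).orderIsoOfFin hgscard j : Fin n) with hgcdef
  have hgcinj : Function.Injective gc := fun j j' h =>
    (gsᶜ.orderIsoOfFin hgscard).injective (Subtype.ext h)
  have hgcnot : ∀ j m, gc j ≠ g m := by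
    intro j m h
    have h2 : gc j ∈ gsᶜ := ((gsᶜ).orderIsoOfFin hgscard j).2
    rw [Finset.mem_compl] at h2
    exact h2 (h ▸ Finset.mem_image_of_mem g (Finset.mem_univ m))
  -- the open set
  set V : Set (Fin ℓ → ℂ) := {x | ∀ i, f i x ≠ 0} with hVdef
  have hVopen : IsOpen V := by
    have hV : V = ⋂ i, (f i) ⁻¹' {0}ᶜ := by
      ext x
      simp [hVdef]
    rw [hV]
    exact isOpen_iInter_of_finite fun i =>
      isOpen_compl_singleton.preimage (f i).continuous_of_finiteDimensional
  have hAc : ContinuousOn A V := by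
    apply continuousOn_pi.mpr
    intro k
    apply continuousOn_pi.mpr
    intro i
    have h1 : ContinuousOn (fun x => (f i x)⁻¹) V :=
      ContinuousOn.inv₀ (f i).continuous_of_finiteDimensional.continuousOn fun x hx => hx i
    exact h1.mul continuousOn_const
  have hBc : ContinuousOn B V := by
    apply continuousOn_pi.mpr
    intro k
    apply continuousOn_pi.mpr
    intro m
    exact continuousOn_pi.mp (continuousOn_pi.mp hAc k) (g m)
  have hdetc : ContinuousOn (fun x => (B x).det) V := by
    have h1 : Continuous (fun M : Matrix (Fin ℓ) (Fin ℓ) ℂ => M.det) :=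
      Continuous.matrix_det continuous_id
    have h2 : (fun x => (B x).det) = (fun M : Matrix (Fin ℓ) (Fin ℓ) ℂ => M.det) ∘ B := rfl
    rw [h2]
    exact h1.comp_continuousOn hBc
  set U : Set (Fin ℓ → ℂ) := V ∩ (fun x => (B x).det) ⁻¹' {(0 : ℂ)}ᶜ with hUdef
  have hUopen : IsOpen U := hdetc.isOpen_inter_preimage hVopen isOpen_compl_singleton
  have hx₀U : x₀ ∈ U := ⟨hx₀, by simpa using hdet₀⟩
  have hUV : U ⊆ V := Set.inter_subset_left
  have hUne : ∀ x ∈ U, ∀ i, f i x ≠ 0 := fun x hx => hx.1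
  have hUdet : ∀ x ∈ U, (B x).det ≠ 0 := fun x hx => hx.2
  -- the local frame
  set colv : (Fin ℓ → ℂ) → Fin (n - ℓ) → (Fin ℓ → ℂ) := fun x j k => A x k (gc j) with hcolvdef
  set c : (Fin ℓ → ℂ) → Fin (n - ℓ) → (Fin ℓ → ℂ) :=
    fun x j => ((B x).det)⁻¹ • (B x).cramer (colv x j) with hcdef
  set s : Fin (n - ℓ) → (Fin ℓ → ℂ) → (Fin n → ℂ) :=
    fun j x i => (if i = gc j then 1 else 0) - ∑ m, c x j m * (if i = g m then 1 else 0)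
    with hsdef
  refine ⟨U, hUopen, hx₀U, hUne, s, ?_, ?_⟩
  · -- continuity of the frame
    intro j
    have hcolc : ContinuousOn (fun x => colv x j) V := by
      apply continuousOn_pi.mpr
      intro k
      exact continuousOn_pi.mp (continuousOn_pi.mp hAc k) (gc j)
    have hcram : ContinuousOn (fun x => (B x).cramer (colv x j)) V := by
      have h1 : Continuous (fun p : Matrix (Fin ℓ) (Fin ℓ) ℂ × (Fin ℓ → ℂ) =>
          Matrix.cramer p.1 p.2) := Continuous.matrix_cramer continuous_fst continuous_snd
      have h2 : (fun x => (B x).cramer (colv x j))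
          = (fun p : Matrix (Fin ℓ) (Fin ℓ) ℂ × (Fin ℓ → ℂ) => Matrix.cramer p.1 p.2)
            ∘ (fun x => (B x, colv x j)) := rfl
      rw [h2]
      exact h1.comp_continuousOn (hBc.prodMk hcolc)
    have hinv : ContinuousOn (fun x => ((B x).det)⁻¹) U :=
      ContinuousOn.inv₀ (hdetc.mono hUV) hUdet
    have hcc : ContinuousOn (fun x => c x j) U := hinv.smul (hcram.mono hUV)
    apply continuousOn_pi.mpr
    intro i
    have hsum : ContinuousOn (fun x => ∑ m, c x j m * (if i = g m then (1 : ℂ) else 0)) U := by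
      have h1 : Continuous (fun v : Fin ℓ → ℂ => ∑ m, v m * (if i = g m then (1 : ℂ) else 0)) :=
        continuous_finset_sum Finset.univ fun m _ => (continuous_apply m).mul continuous_const
      have h2 : (fun x => ∑ m, c x j m * (if i = g m then (1 : ℂ) else 0))
          = (fun v : Fin ℓ → ℂ => ∑ m, v m * (if i = g m then (1 : ℂ) else 0))
            ∘ (fun x => c x j) := rfl
      rw [h2]
      exact h1.comp_continuousOn hcc
    exact continuousOn_const.sub hsum
  · -- pointwise: independence and spanning
    intro x hx
    have hxV : ∀ i, f i x ≠ 0 := hx.1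
    have hdx : (B x).det ≠ 0 := hx.2
    have hBc' : ∀ j, (B x).mulVec (c x j) = colv x j := by
      intro j
      show (B x).mulVec (((B x).det)⁻¹ • (B x).cramer (colv x j)) = colv x j
      rw [Matrix.mulVec_smul, Matrix.mulVec_cramer, smul_smul, inv_mul_cancel₀ hdx, one_smul]
    have hmem : ∀ j, s j x ∈ criticalFiber ℓ n f x := by
      intro j
      rw [mem_criticalFiber_iff]
      funext k
      have hmv : (Amat ℓ n f x).mulVec (s j x) = (A x).mulVec (s j x) := rfl
      rw [hmv]
      show (∑ i, A x k i * s j x i) = 0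
      have hexp : (∑ i, A x k i * s j x i)
          = A x k (gc j) - ∑ m, c x j m * A x k (g m) := by
        have hs' : ∀ i, s j x i
            = (if i = gc j then 1 else 0) - ∑ m, c x j m * (if i = g m then 1 else 0) :=
          fun i => rfl
        simp only [hs', mul_sub, Finset.sum_sub_distrib]
        congr 1
        · rw [Finset.sum_eq_single (gc j)]
          · rw [if_pos rfl, mul_one]
          · intro i _ hi
            rw [if_neg hi, mul_zero]
          · intro h
            exact absurd (Finset.mem_univ _) h
        · simp only [Finset.mul_sum]
          rw [Finset.sum_comm]
          apply Finset.sum_congr rfl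
          intro m _
          rw [Finset.sum_eq_single (g m)]
          · rw [if_pos rfl]
            ring
          · intro i _ hi
            rw [if_neg hi, mul_zero, mul_zero]
          · intro h
            exact absurd (Finset.mem_univ _) h
      rw [hexp]
      have hcol := congrFun (hBc' j) k
      have hmv2 : (B x).mulVec (c x j) k = ∑ m, A x k (g m) * c x j m := rfl
      have hcolv : colv x j k = A x k (gc j) := rfl
      rw [hmv2, hcolv] at hcol
      rw [← hcol]
      rw [sub_eq_zero]
      apply Finset.sum_congr rfl
      intro m _
      ring
    -- values of the frame on the complementary coordinates
    have hval : ∀ j j', s j x (gc j') = if j' = j then 1 else 0 := by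
      intro j j'
      have hs' : s j x (gc j')
          = (if gc j' = gc j then 1 else 0)
            - ∑ m, c x j m * (if gc j' = g m then 1 else 0) := rfl
      rw [hs', Finset.sum_eq_zero fun m _ => by rw [if_neg (hgcnot j' m), mul_zero], sub_zero]
      by_cases h : j' = j
      · subst h
        simp
      · rw [if_neg fun hh => h (hgcinj hh), if_neg h]
    have hind : LinearIndependent ℂ fun j => s j x := by
      rw [Fintype.linearIndependent_iff]
      intro d hd j'
      have h0 := congrFun hd (gc j')
      simp only [Finset.sum_apply, Pi.smul_apply, smul_eq_mul, Pi.zero_apply] at h0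
      rw [Finset.sum_congr rfl fun j _ => by rw [hval j j']] at h0
      simpa [mul_ite, mul_one, mul_zero, Finset.sum_ite_eq] using h0
    refine ⟨hind, ?_⟩
    have hle : Submodule.span ℂ (Set.range fun j => s j x) ≤ criticalFiber ℓ n f x := by
      rw [Submodule.span_le]
      rintro _ ⟨j, rfl⟩
      exact hmem j
    have hfr : Module.finrank ℂ (criticalFiber ℓ n f x) = n - ℓ :=
      finrank_criticalFiber ℓ n f hess x hxV
    have hfs : Module.finrank ℂ (Submodule.span ℂ (Set.range fun j => s j x)) = n - ℓ := by
      rw [finrank_span_eq_card hind]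
      simp
    exact (Submodule.eq_of_le_of_finrank_le hle (by rw [hfr, hfs])).symm
end
end
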